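/- If g ≥ 2 and λ_1, ..., λ_g are distinct real numbers with positive integer multiplicities m_1, ..., m_g satisfying for each i: Σ_{j≠i} m_j (-1 + λ_i λ_j)/(λ_i - λ_j) = 0, then g ≤ 2. -/
import Mathlib

open Finset

/-- Cartan's formula with `c = -1` (hyperbolic case) forces at most two
distinct principal curvatures. -/
theorem cartan_formula_hyperbolic_g_le_two (g : ℕ) (hg : 2 ≤ g)
    (lam : Fin g → ℝ) (m : Fin g → ℕ)
    (hlam : Function.Injective lam) (hm : ∀ i, 0 < m i)
    (hcartan : ∀ i : Fin g,
      ∑ j ∈ univ.erase i, (m j : ℝ) * (-1 + lam i * lam j) / (lam i - lam j) = 0) :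
    g ≤ 2 := by
  by_contra hgt
  push_neg at hgt
  have hne : ∀ i j : Fin g, i ≠ j → lam i - lam j ≠ 0 := fun i j h =>
    sub_ne_zero.mpr (fun e => h (hlam e))
  have hcard : ∀ i : Fin g, 2 ≤ (univ.erase i).card := by
    intro i
    rw [Finset.card_erase_of_mem (mem_univ i), card_univ, Fintype.card_fin]
    omega
  have herased : ∀ i : Fin g, (univ.erase i).Nonempty :=
    fun i => Finset.card_pos.mp (lt_of_lt_of_le two_pos (hcard i))
  have hmpos : ∀ j : Fin g, (0:ℝ) < (m j : ℝ) := fun j => by exact_mod_cast hm j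
  -- no lam i equals 1
  have hlam1 : ∀ i, lam i ≠ 1 := by
    intro i h1
    have h0 := hcartan i
    have hsum : ∑ j ∈ univ.erase i, (m j : ℝ) * (-1 + lam i * lam j) / (lam i - lam j)
        = ∑ j ∈ univ.erase i, (-(m j : ℝ)) := by
      apply Finset.sum_congr rfl
      intro j hj
      have hji : j ≠ i := (mem_erase.mp hj).1
      have hd : lam i - lam j ≠ 0 := hne i j hji.symm
      rw [h1] at hd ⊢
      rw [div_eq_iff hd]
      ring
    rw [hsum, Finset.sum_neg_distrib] at h0
    have : 0 < ∑ j ∈ univ.erase i, (m j : ℝ) :=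
      Finset.sum_pos (fun j _ => hmpos j) (herased i)
    linarith
  have hlamm1 : ∀ i, lam i ≠ -1 := by
    intro i h1
    have h0 := hcartan i
    have hsum : ∑ j ∈ univ.erase i, (m j : ℝ) * (-1 + lam i * lam j) / (lam i - lam j)
        = ∑ j ∈ univ.erase i, ((m j : ℝ)) := by
      apply Finset.sum_congr rfl
      intro j hj
      have hji : j ≠ i := (mem_erase.mp hj).1
      have hd : lam i - lam j ≠ 0 := hne i j hji.symm
      rw [h1] at hd ⊢
      rw [div_eq_iff hd]
      ring
    rw [hsum] at h0
    have : 0 < ∑ j ∈ univ.erase i, (m j : ℝ) :=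
      Finset.sum_pos (fun j _ => hmpos j) (herased i)
    linarith
  set ν : Fin g → ℝ := fun i => (lam i + 1) / (lam i - 1) with hν
  have hd1 : ∀ i, lam i - 1 ≠ 0 := fun i => sub_ne_zero.mpr (hlam1 i)
  have hνinj : ∀ i j : Fin g, i ≠ j → ν i ≠ ν j := by
    intro i j hij heq
    apply hne i j hij
    have h1 := hd1 i
    have h2 := hd1 j
    rw [hν] at heq
    simp only at heq
    rw [div_eq_div_iff h1 h2] at heq
    nlinarith [heq]
  have key : ∀ i, ∑ j ∈ univ.erase i, (m j : ℝ) * (ν i + ν j) / (ν j - ν i) = 0 := by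
    intro i
    rw [← hcartan i]
    apply Finset.sum_congr rfl
    intro j hj
    have hji : j ≠ i := (mem_erase.mp hj).1
    have h1 := hd1 i
    have h2 := hd1 j
    have h3 : lam i - lam j ≠ 0 := hne i j hji.symm
    have h4 : ν j - ν i ≠ 0 := sub_ne_zero.mpr (hνinj j i hji)
    rw [div_eq_div_iff h4 h3, hν]
    simp only
    field_simp
    ring
  have hnonempty : (univ : Finset (Fin g)).Nonempty := ⟨⟨0, by omega⟩, mem_univ _⟩
  obtain ⟨i, -, hi⟩ := Finset.exists_max_image univ ν hnonempty
  obtain ⟨k, -, hk⟩ := Finset.exists_min_image univ ν hnonempty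
  -- claim A : some j with ν i + ν j < 0
  have hA : ∃ j : Fin g, j ≠ i ∧ ν i + ν j < 0 := by
    by_contra hA
    push_neg at hA
    have hterm : ∀ j ∈ univ.erase i, (m j : ℝ) * (ν i + ν j) / (ν j - ν i) ≤ 0 := by
      intro j hj
      have hji : j ≠ i := (mem_erase.mp hj).1
      have hnum : 0 ≤ (m j : ℝ) * (ν i + ν j) :=
        mul_nonneg (le_of_lt (hmpos j)) (hA j hji)
      have hden : ν j - ν i < 0 :=
        sub_neg.mpr (lt_of_le_of_ne (hi j (mem_univ j)) (hνinj j i hji))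
      exact div_nonpos_of_nonneg_of_nonpos hnum hden.le
    obtain ⟨a, ha, b, hb, hab⟩ := Finset.one_lt_card.mp (lt_of_lt_of_le one_lt_two (hcard i))
    have hwit : ∃ j0 ∈ univ.erase i, 0 < ν i + ν j0 := by
      rcases eq_or_ne (ν i + ν a) 0 with h0 | h0
      · refine ⟨b, hb, ?_⟩
        have hbi : b ≠ i := (mem_erase.mp hb).1
        have hne' : ν a ≠ ν b := hνinj a b hab
        have hb0 : ν i + ν b ≠ 0 := fun e => hne' (by linarith)
        exact lt_of_le_of_ne (hA b hbi) (Ne.symm hb0)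
      · exact ⟨a, ha, lt_of_le_of_ne (hA a (mem_erase.mp ha).1) (Ne.symm h0)⟩
    obtain ⟨j0, hj0, hj0pos⟩ := hwit
    have hj0i : j0 ≠ i := (mem_erase.mp hj0).1
    have hden : ν j0 - ν i < 0 :=
      sub_neg.mpr (lt_of_le_of_ne (hi j0 (mem_univ j0)) (hνinj j0 i hj0i))
    have hstrict : (m j0 : ℝ) * (ν i + ν j0) / (ν j0 - ν i) < 0 :=
      div_neg_of_pos_of_neg (mul_pos (hmpos j0) hj0pos) hden
    have hlt : ∑ j ∈ univ.erase i, (m j : ℝ) * (ν i + ν j) / (ν j - ν i)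
        < ∑ j ∈ univ.erase i, (0:ℝ) :=
      Finset.sum_lt_sum hterm ⟨j0, hj0, hstrict⟩
    rw [key i, Finset.sum_const, smul_zero] at hlt
    exact lt_irrefl 0 hlt
  -- claim B : some j with 0 < ν k + ν j
  have hB : ∃ j : Fin g, j ≠ k ∧ 0 < ν k + ν j := by
    by_contra hB
    push_neg at hB
    have hterm : ∀ j ∈ univ.erase k, (m j : ℝ) * (ν k + ν j) / (ν j - ν k) ≤ 0 := by
      intro j hj
      have hjk : j ≠ k := (mem_erase.mp hj).1
      have hnum : (m j : ℝ) * (ν k + ν j) ≤ 0 :=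
        mul_nonpos_of_nonneg_of_nonpos (le_of_lt (hmpos j)) (hB j hjk)
      have hden : 0 < ν j - ν k :=
        sub_pos.mpr (lt_of_le_of_ne (hk j (mem_univ j)) (Ne.symm (hνinj j k hjk)))
      exact div_nonpos_of_nonpos_of_nonneg hnum hden.le
    obtain ⟨a, ha, b, hb, hab⟩ := Finset.one_lt_card.mp (lt_of_lt_of_le one_lt_two (hcard k))
    have hwit : ∃ j0 ∈ univ.erase k, ν k + ν j0 < 0 := by
      rcases eq_or_ne (ν k + ν a) 0 with h0 | h0
      · refine ⟨b, hb, ?_⟩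
        have hbk : b ≠ k := (mem_erase.mp hb).1
        have hne' : ν a ≠ ν b := hνinj a b hab
        have hb0 : ν k + ν b ≠ 0 := fun e => hne' (by linarith)
        exact lt_of_le_of_ne (hB b hbk) hb0
      · exact ⟨a, ha, lt_of_le_of_ne (hB a (mem_erase.mp ha).1) h0⟩
    obtain ⟨j0, hj0, hj0neg⟩ := hwit
    have hj0k : j0 ≠ k := (mem_erase.mp hj0).1
    have hden : 0 < ν j0 - ν k :=
      sub_pos.mpr (lt_of_le_of_ne (hk j0 (mem_univ j0)) (Ne.symm (hνinj j0 k hj0k)))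
    have hstrict : (m j0 : ℝ) * (ν k + ν j0) / (ν j0 - ν k) < 0 :=
      div_neg_of_neg_of_pos (mul_neg_of_pos_of_neg (hmpos j0) hj0neg) hden
    have hlt : ∑ j ∈ univ.erase k, (m j : ℝ) * (ν k + ν j) / (ν j - ν k)
        < ∑ j ∈ univ.erase k, (0:ℝ) :=
      Finset.sum_lt_sum hterm ⟨j0, hj0, hstrict⟩
    rw [key k, Finset.sum_const, smul_zero] at hlt
    exact lt_irrefl 0 hlt
  obtain ⟨j1, -, hj1⟩ := hA
  obtain ⟨j2, -, hj2⟩ := hB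
  have h1 : ν k ≤ ν j1 := hk j1 (mem_univ j1)
  have h2 : ν j2 ≤ ν i := hi j2 (mem_univ j2)
  linarith
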